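/- arXiv:1608.04214 — 5 statements merged into one kernel-verified Lean document; each statement's English description precedes it below -/
import Mathlib

section
/- The square-root upper bound: for any probability measure P' with dP'/dμ = L' square-integrable, satisfying E_μ[L'] = 1, E_μ[(L'-L)²] ≤ δ and E_μ[L'Y] = E_μ[LY], one has E_μ[L'X] ≤ E_μ[LX] + sqrt(δ · det(Σ_μ(X,Y))/det(Σ_μ(Y))). -/
open MeasureTheory Matrix

/-- The covariance of two real random variables under `μ`. -/
noncomputable def covar {Ω : Type*} [MeasurableSpace Ω] (μ : Measure Ω) (f g : Ω → ℝ) : ℝ :=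
  ∫ ω, (f ω - ∫ x, f x ∂μ) * (g ω - ∫ x, g x ∂μ) ∂μ

section Helpers

variable {Ω : Type*} [MeasurableSpace Ω] {μ : Measure Ω}

lemma integrable_mul_of_memL2 {f g : Ω → ℝ} (hf : MemLp f 2 μ) (hg : MemLp g 2 μ) :
    Integrable (fun ω => f ω * g ω) μ := by
  have hs : Integrable (fun ω => (f ω ^ 2 + g ω ^ 2) / 2) μ :=
    (hf.integrable_sq.add hg.integrable_sq).div_const 2
  refine hs.mono' (hf.aestronglyMeasurable.mul hg.aestronglyMeasurable) ?_
  filter_upwards with ω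
  rw [norm_mul, Real.norm_eq_abs, Real.norm_eq_abs]
  nlinarith [sq_nonneg (|f ω| - |g ω|), sq_abs (f ω), sq_abs (g ω), abs_nonneg (f ω),
    abs_nonneg (g ω)]

lemma cs_L2 {f g : Ω → ℝ} (hf : MemLp f 2 μ) (hg : MemLp g 2 μ) :
    (∫ ω, f ω * g ω ∂μ) ^ 2 ≤ (∫ ω, f ω ^ 2 ∂μ) * (∫ ω, g ω ^ 2 ∂μ) := by
  set A := ∫ ω, f ω ^ 2 ∂μ with hA
  set B := ∫ ω, f ω * g ω ∂μ with hB
  set C := ∫ ω, g ω ^ 2 ∂μ with hC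
  have key : ∀ t : ℝ, 0 ≤ A - 2 * t * B + t ^ 2 * C := by
    intro t
    have h1 : 0 ≤ ∫ ω, (f ω - t * g ω) ^ 2 ∂μ := integral_nonneg fun ω => sq_nonneg _
    have h2 : ∫ ω, (f ω - t * g ω) ^ 2 ∂μ = A - 2 * t * B + t ^ 2 * C := by
      have e : ∀ ω, (f ω - t * g ω) ^ 2
          = f ω ^ 2 - 2 * t * (f ω * g ω) + t ^ 2 * g ω ^ 2 := fun ω => by ring
      simp_rw [e]
      rw [integral_add, integral_sub hf.integrable_sq,
        integral_const_mul, integral_const_mul]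
      · exact (integrable_mul_of_memL2 hf hg).const_mul _
      · exact hf.integrable_sq.sub ((integrable_mul_of_memL2 hf hg).const_mul _)
      · exact hg.integrable_sq.const_mul _
    linarith [h1, h2.symm.le, h2.le]
  have hCnn : 0 ≤ C := integral_nonneg fun ω => sq_nonneg _
  rcases eq_or_lt_of_le hCnn with h0 | hpos
  · have hB0 : B = 0 := by
      by_contra hne
      have h1 := key ((A + 1) / (2 * B))
      have h2 := key 0
      rw [← h0] at h1
      have : 2 * ((A + 1) / (2 * B)) * B = A + 1 := by field_simp
      nlinarith
    rw [hB0, ← h0]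
    nlinarith [key 0]
  · have h1 := key (B / C)
    have h2 : (B / C) ^ 2 * C = B ^ 2 / C := by field_simp
    have h3 : 2 * (B / C) * B = 2 * (B ^ 2 / C) := by field_simp
    rw [h2, h3] at h1
    have : B ^ 2 / C ≤ A := by linarith
    calc B ^ 2 = (B ^ 2 / C) * C := by field_simp
    _ ≤ A * C := by nlinarith

lemma covar_comm (μ : Measure Ω) (f g : Ω → ℝ) : covar μ f g = covar μ g f :=
  integral_congr_ae (Filter.Eventually.of_forall fun ω => mul_comm _ _)

/-- Reindexing `Fin 1 ⊕ Fin n ≃ Fin (n+1)`. -/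
def finOneSumEquiv (n : ℕ) : Fin 1 ⊕ Fin n ≃ Fin (n + 1) where
  toFun := Sum.elim (fun _ => (0 : Fin (n + 1))) Fin.succ
  invFun := Fin.cases (Sum.inl 0) Sum.inr
  left_inv := by
    rintro (i | i)
    · simp [Fin.eq_zero i]
    · simp
  right_inv := by
    intro j
    induction j using Fin.cases with
    | zero => simp
    | succ k => simp

end Helpers

/-- The square-root upper bound: any density `L'` in the `δ`-neighborhood of `L`
preserving the mean of `Y` satisfies
`E_μ[L'X] ≤ E_μ[LX] + √(δ · det Σ_μ(X,Y) / det Σ_μ(Y))`. -/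
theorem stmt5 {Ω : Type*} [MeasurableSpace Ω] (μ : Measure Ω) [IsProbabilityMeasure μ]
    (n : ℕ) (X : Ω → ℝ) (Y : Fin n → Ω → ℝ) (L : Ω → ℝ)
    (hX : MemLp X 2 μ) (hY : ∀ i, MemLp (Y i) 2 μ)
    (hLnn : ∀ ω, 0 ≤ L ω) (hLmean : ∫ ω, L ω ∂μ = 1) (hL : MemLp L 2 μ)
    (SXY : Matrix (Fin (n + 1)) (Fin (n + 1)) ℝ)
    (hSXY : SXY = Matrix.of fun i j =>
      covar μ ((Fin.cons X Y : Fin (n+1) → Ω → ℝ) i) ((Fin.cons X Y : Fin (n+1) → Ω → ℝ) j))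
    (SY : Matrix (Fin n) (Fin n) ℝ)
    (hSY : SY = Matrix.of fun i j => covar μ (Y i) (Y j))
    (hinv : IsUnit SXY.det) (hinvY : IsUnit SY.det)
    (δ : ℝ) (hδ : 0 < δ)
    (L' : Ω → ℝ) (hL'nn : ∀ ω, 0 ≤ L' ω) (hL' : MemLp L' 2 μ)
    (hL'mean : ∫ ω, L' ω ∂μ = 1)
    (hdiv : ∫ ω, (L' ω - L ω) ^ 2 ∂μ ≤ δ)
    (hmom : ∀ i, ∫ ω, L' ω * Y i ω ∂μ = ∫ ω, L ω * Y i ω ∂μ) :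
    ∫ ω, L' ω * X ω ∂μ ≤ ∫ ω, L ω * X ω ∂μ + Real.sqrt (δ * (SXY.det / SY.det)) := by
  classical
  set mX : ℝ := ∫ x, X x ∂μ with hmX
  set mY : Fin n → ℝ := fun i => ∫ x, Y i x ∂μ with hmY
  set Xc : Ω → ℝ := fun ω => X ω - mX with hXcdef
  set Yc : Fin n → Ω → ℝ := fun i ω => Y i ω - mY i with hYcdef
  have hXc : MemLp Xc 2 μ := hX.sub (memLp_const mX)
  have hYc : ∀ i, MemLp (Yc i) 2 μ := fun i => (hY i).sub (memLp_const _)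
  set VX : ℝ := covar μ X X with hVX
  set c : Fin n → ℝ := fun i => covar μ X (Y i) with hc
  haveI : Invertible SY := SY.invertibleOfIsUnitDet hinvY
  set b : Fin n → ℝ := SY⁻¹ *ᵥ c with hbdef
  have hb : ∀ i, ∑ j, SY i j * b j = c i := by
    have : SY *ᵥ b = c := by
      rw [hbdef, Matrix.mulVec_mulVec, Matrix.mul_nonsing_inv _ hinvY, Matrix.one_mulVec]
    intro i
    have := congrFun this i
    simpa [Matrix.mulVec, dotProduct] using this
  set β : ℝ := ∑ i, b i * c i with hβ
  set s : ℝ := VX - β with hs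
  -- basic covariance formulas
  have hVX' : VX = ∫ ω, Xc ω * Xc ω ∂μ := rfl
  have hcY : ∀ i, c i = ∫ ω, Xc ω * Yc i ω ∂μ := fun i => rfl
  have hSYij : ∀ i j, SY i j = ∫ ω, Yc i ω * Yc j ω ∂μ := fun i j => by rw [hSY]; rfl
  -- the reindexing equivalence
  set e : (Fin 1 ⊕ Fin n) ≃ Fin (n + 1) := finOneSumEquiv n with hedef
  have hsub : SXY.submatrix e e =
      Matrix.fromBlocks (Matrix.of fun _ _ => VX) (Matrix.of fun _ j => c j)
        (Matrix.of fun i _ => c i) SY := by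
    ext i j
    rcases i with i | i <;> rcases j with j | j
    · simp [hedef, finOneSumEquiv, hSXY, hSY, hVX, hc, Fin.cons_zero, Fin.cons_succ]
    · simp [hedef, finOneSumEquiv, hSXY, hSY, hVX, hc, Fin.cons_zero, Fin.cons_succ]
    · simp [hedef, finOneSumEquiv, hSXY, hSY, hVX, hc, Fin.cons_zero, Fin.cons_succ,
        covar_comm μ (Y i) X]
    · simp [hedef, finOneSumEquiv, hSXY, hSY, hVX, hc, Fin.cons_zero, Fin.cons_succ]
  have hdet : SXY.det = SY.det * s := by
    have h1 : SXY.det = (SXY.submatrix e e).det := (Matrix.det_submatrix_equiv_self e SXY).symm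
    rw [h1, hsub, Matrix.det_fromBlocks₂₂]
    congr 1
    rw [Matrix.det_fin_one]
    rw [invOf_eq_nonsing_inv]
    simp only [Matrix.sub_apply, Matrix.of_apply, Matrix.mul_apply, hs, hβ, hbdef,
      Matrix.mulVec, dotProduct]
    congr 1
    simp only [Finset.sum_mul, Finset.mul_sum]
    rw [Finset.sum_comm]
    exact Finset.sum_congr rfl fun i _ => Finset.sum_congr rfl fun j _ => by ring
  -- the residual
  set S : Ω → ℝ := fun ω => ∑ i, b i * Yc i ω with hSdef
  have hSm : MemLp S 2 μ := by
    have h := memLp_finset_sum' (μ := μ) Finset.univ fun i (_ : i ∈ Finset.univ) =>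
      (hYc i).const_mul (b i)
    rw [hSdef]
    convert h using 1
    funext ω
    simp
  set R : Ω → ℝ := fun ω => Xc ω - S ω with hRdef
  have hRm : MemLp R 2 μ := hXc.sub hSm
  have hXcS : ∫ ω, Xc ω * S ω ∂μ = β := by
    have e1 : ∀ ω, Xc ω * S ω = ∑ i, b i * (Xc ω * Yc i ω) := fun ω => by
      rw [hSdef, Finset.mul_sum]
      exact Finset.sum_congr rfl fun i _ => by ring
    calc ∫ ω, Xc ω * S ω ∂μ = ∫ ω, ∑ i, b i * (Xc ω * Yc i ω) ∂μ :=
          integral_congr_ae (Filter.Eventually.of_forall e1)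
    _ = ∑ i, ∫ ω, b i * (Xc ω * Yc i ω) ∂μ :=
          integral_finset_sum _ fun i _ => (integrable_mul_of_memL2 hXc (hYc i)).const_mul _
    _ = ∑ i, b i * c i := by
          refine Finset.sum_congr rfl fun i _ => ?_
          rw [integral_const_mul, ← hcY i]
    _ = β := rfl
  have hSS : ∫ ω, S ω * S ω ∂μ = β := by
    have e1 : ∀ ω, S ω * S ω = ∑ i, ∑ j, (b i * b j) * (Yc i ω * Yc j ω) := fun ω => by
      rw [hSdef, Finset.sum_mul_sum]
      exact Finset.sum_congr rfl fun i _ => Finset.sum_congr rfl fun j _ => by ring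
    calc ∫ ω, S ω * S ω ∂μ = ∫ ω, ∑ i, ∑ j, (b i * b j) * (Yc i ω * Yc j ω) ∂μ :=
          integral_congr_ae (Filter.Eventually.of_forall e1)
    _ = ∑ i, ∑ j, ∫ ω, (b i * b j) * (Yc i ω * Yc j ω) ∂μ := by
          rw [integral_finset_sum _ fun i _ => integrable_finset_sum _ fun j _ =>
            (integrable_mul_of_memL2 (hYc i) (hYc j)).const_mul _]
          exact Finset.sum_congr rfl fun i _ => integral_finset_sum _ fun j _ =>
            (integrable_mul_of_memL2 (hYc i) (hYc j)).const_mul _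
    _ = ∑ i, ∑ j, (b i * b j) * SY i j := by
          exact Finset.sum_congr rfl fun i _ => Finset.sum_congr rfl fun j _ => by
            rw [integral_const_mul, ← hSYij i j]
    _ = ∑ i, b i * ∑ j, SY i j * b j := by
          refine Finset.sum_congr rfl fun i _ => ?_
          rw [Finset.mul_sum]
          exact Finset.sum_congr rfl fun j _ => by ring
    _ = β := by
          rw [hβ]
          exact Finset.sum_congr rfl fun i _ => by rw [hb i]
  have hRR : ∫ ω, R ω ^ 2 ∂μ = s := by
    have e1 : ∀ ω, R ω ^ 2 = Xc ω * Xc ω - 2 * (Xc ω * S ω) + S ω * S ω := fun ω => by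
      rw [hRdef]; ring
    calc ∫ ω, R ω ^ 2 ∂μ
        = ∫ ω, (Xc ω * Xc ω - 2 * (Xc ω * S ω) + S ω * S ω) ∂μ :=
          integral_congr_ae (Filter.Eventually.of_forall e1)
    _ = (∫ ω, Xc ω * Xc ω ∂μ) - 2 * ∫ ω, Xc ω * S ω ∂μ + ∫ ω, S ω * S ω ∂μ := by
          rw [integral_add, integral_sub (integrable_mul_of_memL2 hXc hXc), integral_const_mul]
          · exact (integrable_mul_of_memL2 hXc hSm).const_mul _
          · exact (integrable_mul_of_memL2 hXc hXc).sub
              ((integrable_mul_of_memL2 hXc hSm).const_mul _)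
          · exact integrable_mul_of_memL2 hSm hSm
    _ = VX - 2 * β + β := by rw [hXcS, hSS, ← hVX']
    _ = s := by rw [hs]; ring
  have hs_nn : 0 ≤ s := hRR ▸ integral_nonneg fun ω => sq_nonneg _
  -- the perturbation
  set g : Ω → ℝ := fun ω => L' ω - L ω with hgdef
  have hgm : MemLp g 2 μ := hL'.sub hL
  have hintL : Integrable L μ := hL.integrable one_le_two
  have hintL' : Integrable L' μ := hL'.integrable one_le_two
  have hg0 : ∫ ω, g ω ∂μ = 0 := by
    rw [hgdef]
    rw [integral_sub hintL' hintL, hL'mean, hLmean, sub_self]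
  have hgY : ∀ i, ∫ ω, g ω * Y i ω ∂μ = 0 := by
    intro i
    have e1 : ∀ ω, g ω * Y i ω = L' ω * Y i ω - L ω * Y i ω := fun ω => by
      rw [hgdef]; ring
    rw [integral_congr_ae (Filter.Eventually.of_forall e1),
      integral_sub (integrable_mul_of_memL2 hL' (hY i)) (integrable_mul_of_memL2 hL (hY i)),
      hmom i, sub_self]
  have hgX : ∫ ω, g ω * X ω ∂μ = (∫ ω, L' ω * X ω ∂μ) - ∫ ω, L ω * X ω ∂μ := by
    have e1 : ∀ ω, g ω * X ω = L' ω * X ω - L ω * X ω := fun ω => by rw [hgdef]; ring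
    rw [integral_congr_ae (Filter.Eventually.of_forall e1),
      integral_sub (integrable_mul_of_memL2 hL' hX) (integrable_mul_of_memL2 hL hX)]
  have hgYc : ∀ i, ∫ ω, g ω * Yc i ω ∂μ = 0 := by
    intro i
    have e1 : ∀ ω, g ω * Yc i ω = g ω * Y i ω - mY i * g ω := fun ω => by
      rw [hYcdef]; ring
    rw [integral_congr_ae (Filter.Eventually.of_forall e1),
      integral_sub (integrable_mul_of_memL2 hgm (hY i)) ((hgm.integrable one_le_two).const_mul _),
      hgY i, integral_const_mul, hg0, mul_zero, sub_self]
  have hgR : ∫ ω, g ω * R ω ∂μ = ∫ ω, g ω * X ω ∂μ := by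
    have e1 : ∀ ω, g ω * R ω = (g ω * X ω - mX * g ω) - ∑ i, b i * (g ω * Yc i ω) := fun ω => by
      simp only [hRdef, hSdef, hXcdef]
      have h0 : g ω * (X ω - mX - ∑ i, b i * Yc i ω)
          = (g ω * X ω - mX * g ω) - g ω * ∑ i, b i * Yc i ω := by ring
      have h1 : ∀ i ∈ Finset.univ, g ω * (b i * Yc i ω) = b i * (g ω * Yc i ω) :=
        fun i _ => by ring
      rw [h0, Finset.mul_sum, Finset.sum_congr rfl h1]
    have hint2 : Integrable (fun ω => g ω * X ω - mX * g ω) μ :=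
      (integrable_mul_of_memL2 hgm hX).sub ((hgm.integrable one_le_two).const_mul _)
    have hint3 : Integrable (fun ω => ∑ i, b i * (g ω * Yc i ω)) μ :=
      integrable_finset_sum _ fun i _ => (integrable_mul_of_memL2 hgm (hYc i)).const_mul _
    rw [integral_congr_ae (Filter.Eventually.of_forall e1), integral_sub hint2 hint3,
      integral_sub (integrable_mul_of_memL2 hgm hX) ((hgm.integrable one_le_two).const_mul _),
      integral_const_mul, hg0, mul_zero, sub_zero,
      integral_finset_sum _ fun i _ => (integrable_mul_of_memL2 hgm (hYc i)).const_mul _]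
    have : ∀ i ∈ Finset.univ, b i * ∫ ω, g ω * Yc i ω ∂μ = 0 := fun i _ => by
      rw [hgYc i, mul_zero]
    simp_rw [integral_const_mul]
    rw [Finset.sum_congr rfl this, Finset.sum_const_zero, sub_zero]
  -- combine
  have hg2 : ∫ ω, g ω ^ 2 ∂μ ≤ δ := hdiv
  have hcs : (∫ ω, g ω * R ω ∂μ) ^ 2 ≤ δ * s := by
    refine le_trans (cs_L2 hgm hRm) ?_
    rw [hRR]
    exact mul_le_mul_of_nonneg_right hg2 hs_nn
  have h3 : ∫ ω, g ω * R ω ∂μ ≤ Real.sqrt (δ * s) := by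
    calc ∫ ω, g ω * R ω ∂μ ≤ |∫ ω, g ω * R ω ∂μ| := le_abs_self _
    _ = Real.sqrt ((∫ ω, g ω * R ω ∂μ) ^ 2) := (Real.sqrt_sq_eq_abs _).symm
    _ ≤ Real.sqrt (δ * s) := Real.sqrt_le_sqrt hcs
  have hfinal : SXY.det / SY.det = s := by
    rw [hdet, mul_div_cancel_left₀ _ hinvY.ne_zero]
  rw [hfinal]
  linarith [hgX ▸ hgR ▸ h3, hgR, hgX, h3]
end

section
/- With one moment constraint, the square-root bounds are E[X] ± sqrt(δ · Var(X) · (1 - Corr(X,Y)²)): for any L' ≥ 0 with E[L'] = 1, E[(L'-1)²] ≤ δ and E[L'Y] = E[Y], one has |E[L'X] - E[X]| ≤ sqrt(δ · Var(X)(1 - Corr(X,Y)²)). -/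
open MeasureTheory

lemma aux_int_mul {Ω : Type*} [MeasurableSpace Ω] {μ : Measure Ω} {f g : Ω → ℝ}
    (hf : MemLp f 2 μ) (hg : MemLp g 2 μ) :
    Integrable (fun ω => f ω * g ω) μ := by
  have h := hg.smul (E := ℝ) (𝕜 := ℝ) hf
      (p := 2) (q := 2) (r := 1) (hpqr := ⟨by simp [ENNReal.inv_two_add_inv_two]⟩)
  rw [← memLp_one_iff_integrable]
  exact h

lemma aux_cs {Ω : Type*} [MeasurableSpace Ω] {μ : Measure Ω} {f g : Ω → ℝ}
    (hf : MemLp f 2 μ) (hg : MemLp g 2 μ) :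
    (∫ ω, f ω * g ω ∂μ) ^ 2 ≤ (∫ ω, f ω ^ 2 ∂μ) * (∫ ω, g ω ^ 2 ∂μ) := by
  set F : Lp ℝ 2 μ := hf.toLp f
  set G : Lp ℝ 2 μ := hg.toLp g
  have hFG : (inner ℝ F G : ℝ) = ∫ ω, f ω * g ω ∂μ := by
    rw [L2.inner_def]
    refine integral_congr_ae ?_
    filter_upwards [hf.coeFn_toLp, hg.coeFn_toLp] with ω h1 h2
    simp [F, G, h1, h2, RCLike.inner_apply, mul_comm]
  have hFF : (inner ℝ F F : ℝ) = ∫ ω, f ω ^ 2 ∂μ := by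
    rw [L2.inner_def]
    refine integral_congr_ae ?_
    filter_upwards [hf.coeFn_toLp] with ω h1
    simp [F, h1, RCLike.inner_apply, sq]
  have hGG : (inner ℝ G G : ℝ) = ∫ ω, g ω ^ 2 ∂μ := by
    rw [L2.inner_def]
    refine integral_congr_ae ?_
    filter_upwards [hg.coeFn_toLp] with ω h1
    simp [G, h1, RCLike.inner_apply, sq]
  have := real_inner_mul_inner_self_le F G
  rw [hFG, hFF, hGG] at this
  calc (∫ ω, f ω * g ω ∂μ) ^ 2 = (∫ ω, f ω * g ω ∂μ) * (∫ ω, f ω * g ω ∂μ) := sq _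
    _ ≤ _ := this

/-- One moment constraint: the square-root bounds read
`|E[L'X] - E[X]| ≤ √(δ · Var(X)(1 - Corr(X,Y)²))`. Here `μ = P` and `L ≡ 1`. -/
theorem stmt8 {Ω : Type*} [MeasurableSpace Ω] (μ : Measure Ω) [IsProbabilityMeasure μ]
    (X Y : Ω → ℝ) (hX : MemLp X 2 μ) (hY : MemLp Y 2 μ)
    (varX varY cov corr : ℝ)
    (hvarX : varX = ∫ ω, (X ω - ∫ x, X x ∂μ) ^ 2 ∂μ) (hvarXpos : 0 < varX)
    (hvarY : varY = ∫ ω, (Y ω - ∫ x, Y x ∂μ) ^ 2 ∂μ) (hvarYpos : 0 < varY)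
    (hcov : cov = ∫ ω, (X ω - ∫ x, X x ∂μ) * (Y ω - ∫ x, Y x ∂μ) ∂μ)
    (hcorr : corr = cov / Real.sqrt (varX * varY)) (hcorrlt : |corr| < 1)
    (δ : ℝ) (hδ : 0 < δ)
    (L' : Ω → ℝ) (hL'nn : ∀ ω, 0 ≤ L' ω) (hL' : MemLp L' 2 μ)
    (hL'mean : ∫ ω, L' ω ∂μ = 1)
    (hdiv : ∫ ω, (L' ω - 1) ^ 2 ∂μ ≤ δ)
    (hmom : ∫ ω, L' ω * Y ω ∂μ = ∫ ω, Y ω ∂μ) :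
    |(∫ ω, L' ω * X ω ∂μ) - ∫ ω, X ω ∂μ| ≤
      Real.sqrt (δ * (varX * (1 - corr ^ 2))) := by
  set m : ℝ := ∫ x, X x ∂μ with hm
  set mY : ℝ := ∫ x, Y x ∂μ with hmY
  set b : ℝ := cov / varY with hb
  -- membership facts
  have hg2 : MemLp (fun ω => L' ω - 1) 2 μ := hL'.sub (memLp_const 1)
  have hXc : MemLp (fun ω => X ω - m) 2 μ := hX.sub (memLp_const m)
  have hYc : MemLp (fun ω => Y ω - mY) 2 μ := hY.sub (memLp_const mY)
  have hYcb : MemLp (fun ω => b * (Y ω - mY)) 2 μ := hYc.const_mul b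
  have hh : MemLp (fun ω => (X ω - m) - b * (Y ω - mY)) 2 μ := hXc.sub hYcb
  -- key lemma: ∫ (L'-1)(Z-c) = ∫ L'Z - ∫ Z
  have hkey : ∀ (Z : Ω → ℝ), MemLp Z 2 μ → ∀ c : ℝ,
      ∫ ω, (L' ω - 1) * (Z ω - c) ∂μ = (∫ ω, L' ω * Z ω ∂μ) - ∫ ω, Z ω ∂μ := by
    intro Z hZ c
    have iLZ : Integrable (fun ω => L' ω * Z ω) μ := aux_int_mul hL' hZ
    have iL : Integrable L' μ := hL'.integrable one_le_two
    have iZ : Integrable Z μ := hZ.integrable one_le_two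
    have e : ∀ ω, (L' ω - 1) * (Z ω - c) =
        (L' ω * Z ω - c * L' ω) - (Z ω - c) := by intro ω; ring
    have j1 : Integrable (fun ω => L' ω * Z ω - c * L' ω) μ := iLZ.sub (iL.const_mul c)
    have j2 : Integrable (fun ω => Z ω - c) μ := iZ.sub (integrable_const c)
    rw [integral_congr_ae (Filter.Eventually.of_forall e)]
    rw [integral_sub j1 j2, integral_sub iLZ (iL.const_mul c),
      integral_sub iZ (integrable_const c),
      integral_const_mul, hL'mean, integral_const]
    simp
  -- A = ∫ (L'-1)·h = ∫ L'X - m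
  have hA : ∫ ω, (L' ω - 1) * ((X ω - m) - b * (Y ω - mY)) ∂μ =
      (∫ ω, L' ω * X ω ∂μ) - m := by
    have i1 : Integrable (fun ω => (L' ω - 1) * (X ω - m)) μ := aux_int_mul hg2 hXc
    have i2 : Integrable (fun ω => (L' ω - 1) * (Y ω - mY)) μ := aux_int_mul hg2 hYc
    have i3 : Integrable (fun ω => b * ((L' ω - 1) * (Y ω - mY))) μ := i2.const_mul b
    have e : ∀ ω, (L' ω - 1) * ((X ω - m) - b * (Y ω - mY)) =
        (L' ω - 1) * (X ω - m) - b * ((L' ω - 1) * (Y ω - mY)) := by intro ω; ring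
    rw [integral_congr_ae (Filter.Eventually.of_forall e),
      integral_sub i1 i3, integral_const_mul,
      hkey X hX m, hkey Y hY mY, hmom]
    simp [hm, hmY]
  -- B = ∫ h² = varX - cov²/varY
  have hB : ∫ ω, ((X ω - m) - b * (Y ω - mY)) ^ 2 ∂μ = varX - cov ^ 2 / varY := by
    have iX2 : Integrable (fun ω => (X ω - m) ^ 2) μ := hXc.integrable_sq
    have iY2 : Integrable (fun ω => (Y ω - mY) ^ 2) μ := hYc.integrable_sq
    have iXY : Integrable (fun ω => (X ω - m) * (Y ω - mY)) μ := aux_int_mul hXc hYc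
    have e : ∀ ω, ((X ω - m) - b * (Y ω - mY)) ^ 2 =
        ((X ω - m) ^ 2 - (2 * b) * ((X ω - m) * (Y ω - mY))) + b ^ 2 * (Y ω - mY) ^ 2 := by
      intro ω; ring
    have j1 : Integrable (fun ω => (X ω - m) ^ 2 - (2 * b) * ((X ω - m) * (Y ω - mY))) μ :=
      iX2.sub (iXY.const_mul (2 * b))
    have j2 : Integrable (fun ω => b ^ 2 * (Y ω - mY) ^ 2) μ := iY2.const_mul (b ^ 2)
    have j3 : Integrable (fun ω => (2 * b) * ((X ω - m) * (Y ω - mY))) μ :=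
      iXY.const_mul (2 * b)
    rw [integral_congr_ae (Filter.Eventually.of_forall e),
      integral_add j1 j2, integral_sub iX2 j3, integral_const_mul, integral_const_mul,
      ← hvarX, ← hvarY, ← hcov, hb]
    field_simp
    ring
  -- varX(1-corr²) = varX - cov²/varY
  have hcorr2 : varX * (1 - corr ^ 2) = varX - cov ^ 2 / varY := by
    have hs : Real.sqrt (varX * varY) ^ 2 = varX * varY :=
      Real.sq_sqrt (by positivity)
    rw [hcorr, div_pow, hs]
    field_simp
  -- Cauchy–Schwarz
  have hcs := aux_cs hg2 hh
  rw [hA, hB] at hcs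
  have hBnn : 0 ≤ varX - cov ^ 2 / varY := by
    rw [← hB]
    exact integral_nonneg fun ω => sq_nonneg _
  have hg2nn : 0 ≤ ∫ ω, (L' ω - 1) ^ 2 ∂μ := integral_nonneg fun ω => sq_nonneg _
  have h2 : ((∫ ω, L' ω * X ω ∂μ) - m) ^ 2 ≤ δ * (varX * (1 - corr ^ 2)) := by
    rw [hcorr2]
    calc ((∫ ω, L' ω * X ω ∂μ) - m) ^ 2
        ≤ (∫ ω, (L' ω - 1) ^ 2 ∂μ) * (varX - cov ^ 2 / varY) := hcs
      _ ≤ δ * (varX - cov ^ 2 / varY) := mul_le_mul_of_nonneg_right hdiv hBnn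
  calc |(∫ ω, L' ω * X ω ∂μ) - m|
      = Real.sqrt (((∫ ω, L' ω * X ω ∂μ) - m) ^ 2) := (Real.sqrt_sq_eq_abs _).symm
    _ ≤ Real.sqrt (δ * (varX * (1 - corr ^ 2))) := Real.sqrt_le_sqrt h2
end

section
/- Adding a moment constraint tightens the square-root bound: if Y⁺ = (Y₁,...,Y_d) extends Y = (Y₁,...,Y_{d-1}) and Σ_μ(X,Y⁺) is invertible, then det(Σ_μ(X,Y⁺))/det(Σ_μ(Y⁺)) ≤ det(Σ_μ(X,Y))/det(Σ_μ(Y)), with equality if and only if Cov_μ(X,Y_d) = Cov_μ(X,Y) Σ_μ(Y)⁻¹ Cov_μ(Y,Y_d). -/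
open MeasureTheory Matrix

namespace Stmt9Aux

variable {Ω : Type*} [MeasurableSpace Ω] {μ : Measure Ω} [IsProbabilityMeasure μ]

omit [IsProbabilityMeasure μ] in
lemma covar_comm (f g : Ω → ℝ) : covar μ f g = covar μ g f := by
  unfold covar; congr 1; ext ω; ring

lemma integrable_centered_mul {f g : Ω → ℝ} (hf : MemLp f 2 μ) (hg : MemLp g 2 μ) :
    Integrable (fun ω => (f ω - ∫ x, f x ∂μ) * (g ω - ∫ x, g x ∂μ)) μ := by
  have hf' : MemLp (fun ω => f ω - ∫ x, f x ∂μ) 2 μ := hf.sub (memLp_const _)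
  have hg' : MemLp (fun ω => g ω - ∫ x, g x ∂μ) 2 μ := hg.sub (memLp_const _)
  have h1 : (1 : ENNReal) / 1 = 1 / 2 + 1 / 2 := by
    rw [ENNReal.div_add_div_same, one_add_one_eq_two,
      ENNReal.div_self two_ne_zero ENNReal.ofNat_ne_top, div_one]
  have := (hg'.smul hf' (r := 1) : MemLp (_ • _) 1 μ)
  have h2 := this.integrable le_rfl
  exact h2

lemma covar_sum {k : ℕ} (Z : Fin k → Ω → ℝ) (hZ : ∀ i, MemLp (Z i) 2 μ) (v w : Fin k → ℝ) :
    covar μ (fun ω => ∑ i, v i * Z i ω) (fun ω => ∑ i, w i * Z i ω)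
      = ∑ i, ∑ j, v i * w j * covar μ (Z i) (Z j) := by
  have hint : ∀ i : Fin k, Integrable (Z i) μ := fun i => (hZ i).integrable one_le_two
  have hm : ∀ u : Fin k → ℝ,
      (∫ x, (∑ i, u i * Z i x) ∂μ) = ∑ i, u i * ∫ x, Z i x ∂μ := by
    intro u
    rw [integral_finset_sum _ fun i _ => (hint i).const_mul _]
    simp [integral_const_mul]
  unfold covar
  have key : ∀ ω, (∑ i, v i * Z i ω - ∫ x, (∑ i, v i * Z i x) ∂μ) *
      (∑ j, w j * Z j ω - ∫ x, (∑ j, w j * Z j x) ∂μ)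
      = ∑ i, ∑ j, v i * w j *
          ((Z i ω - ∫ x, Z i x ∂μ) * (Z j ω - ∫ x, Z j x ∂μ)) := by
    intro ω
    rw [hm v, hm w, ← Finset.sum_sub_distrib, ← Finset.sum_sub_distrib, Finset.sum_mul_sum]
    exact Finset.sum_congr rfl fun i _ => Finset.sum_congr rfl fun j _ => by ring
  simp_rw [key]
  rw [integral_finset_sum _ fun i _ => integrable_finset_sum _ fun j _ =>
    ((integrable_centered_mul (hZ i) (hZ j)).const_mul _)]
  refine Finset.sum_congr rfl fun i _ => ?_
  rw [integral_finset_sum _ fun j _ => ((integrable_centered_mul (hZ i) (hZ j)).const_mul _)]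
  exact Finset.sum_congr rfl fun j _ => integral_const_mul _ _

lemma posSemidef_cov {k : ℕ} (Z : Fin k → Ω → ℝ) (hZ : ∀ i, MemLp (Z i) 2 μ) :
    (Matrix.of fun i j => covar μ (Z i) (Z j)).PosSemidef := by
  rw [Matrix.posSemidef_iff_dotProduct_mulVec]
  constructor
  · ext i j
    simp only [IsHermitian, conjTranspose_apply, of_apply, star_trivial, transpose_apply]
    exact covar_comm _ _
  · intro x
    have hq : star x ⬝ᵥ (Matrix.of fun i j => covar μ (Z i) (Z j)) *ᵥ x
        = ∑ i, ∑ j, x i * x j * covar μ (Z i) (Z j) := by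
      simp only [mulVec, dotProduct, Matrix.of_apply, Finset.mul_sum, star_trivial]
      exact Finset.sum_congr rfl fun i _ => Finset.sum_congr rfl fun j _ => by ring
    rw [hq, ← covar_sum Z hZ x x]
    exact integral_nonneg fun ω => mul_self_nonneg _

def consEquiv (m : ℕ) : Fin m ⊕ Unit ≃ Fin (m + 1) where
  toFun := Sum.elim Fin.succ fun _ => 0
  invFun := Fin.cases (Sum.inr ()) Sum.inl
  left_inv := by rintro (i | ⟨⟩) <;> simp
  right_inv := by
    intro i
    induction i using Fin.cases <;> simp

lemma det_cons_schur {m : ℕ} (M : Matrix (Fin (m + 1)) (Fin (m + 1)) ℝ)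
    (S : Matrix (Fin m) (Fin m) ℝ) (c : Fin m → ℝ) (V : ℝ)
    (h00 : M 0 0 = V) (h0j : ∀ j, M 0 j.succ = c j) (hi0 : ∀ i, M i.succ 0 = c i)
    (hij : ∀ i j, M i.succ j.succ = S i j) (hS : IsUnit S.det) :
    M.det = S.det * (V - c ⬝ᵥ S⁻¹ *ᵥ c) := by
  haveI := S.invertibleOfIsUnitDet hS
  set B : Matrix (Fin m) Unit ℝ := Matrix.of fun i _ => c i with hB
  set C : Matrix Unit (Fin m) ℝ := Matrix.of fun _ j => c j with hC
  set D : Matrix Unit Unit ℝ := Matrix.of fun _ _ => V with hD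
  have hM : M.submatrix (consEquiv m) (consEquiv m) = fromBlocks S B C D := by
    ext i j
    rcases i with i | ⟨⟩ <;> rcases j with j | ⟨⟩ <;>
      simp [consEquiv, fromBlocks, h00, h0j, hi0, hij, hB, hC, hD]
  have hdet : M.det = (fromBlocks S B C D).det := by
    rw [← hM, Matrix.det_submatrix_equiv_self]
  rw [hdet, det_fromBlocks₁₁]
  congr 1
  rw [det_unique]
  have hCB : (C * ⅟S * B) default default = c ⬝ᵥ S⁻¹ *ᵥ c := by
    rw [invOf_eq_nonsing_inv]
    simp only [Matrix.mul_apply, dotProduct, mulVec, Matrix.of_apply, hB, hC,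
      Finset.sum_mul, Finset.mul_sum]
    rw [Finset.sum_comm]
    exact Finset.sum_congr rfl fun i _ => Finset.sum_congr rfl fun j _ => by ring
  rw [Matrix.sub_apply, hCB]
  simp [hD]

lemma quad_identity {k : ℕ} (M : Matrix (Fin k) (Fin k) ℝ) (hsymm : Mᵀ = M)
    (h : IsUnit M.det) (cc a : Fin k → ℝ) :
    (a - M⁻¹ *ᵥ cc) ⬝ᵥ M *ᵥ (a - M⁻¹ *ᵥ cc)
      = a ⬝ᵥ M *ᵥ a - 2 * (a ⬝ᵥ cc) + cc ⬝ᵥ M⁻¹ *ᵥ cc := by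
  have h1 : M *ᵥ (M⁻¹ *ᵥ cc) = cc := by
    rw [Matrix.mulVec_mulVec, Matrix.mul_nonsing_inv _ h, Matrix.one_mulVec]
  have h2 : ∀ x : Fin k → ℝ, (M⁻¹ *ᵥ cc) ⬝ᵥ (M *ᵥ x) = cc ⬝ᵥ x := by
    intro x
    rw [Matrix.dotProduct_mulVec]
    have hv : (M⁻¹ *ᵥ cc) ᵥ* M = cc := by
      nth_rewrite 2 [← hsymm]
      rw [Matrix.vecMul_transpose, h1]
    rw [hv]
  have h3 : a ⬝ᵥ (M *ᵥ (M⁻¹ *ᵥ cc)) = a ⬝ᵥ cc := by rw [h1]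
  rw [sub_dotProduct, Matrix.mulVec_sub, dotProduct_sub, dotProduct_sub, h3, h2 a,
    h2 (M⁻¹ *ᵥ cc), dotProduct_comm cc a]
  ring

lemma dot_inv_comm {k : ℕ} (M : Matrix (Fin k) (Fin k) ℝ) (hsymm : Mᵀ = M)
    (b c : Fin k → ℝ) : b ⬝ᵥ M⁻¹ *ᵥ c = c ⬝ᵥ M⁻¹ *ᵥ b := by
  have hsi : M⁻¹ᵀ = M⁻¹ := by rw [Matrix.transpose_nonsing_inv, hsymm]
  have hvm : b ᵥ* M⁻¹ = M⁻¹ *ᵥ b := by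
    nth_rewrite 1 [← hsi]
    rw [Matrix.vecMul_transpose]
  rw [Matrix.dotProduct_mulVec, hvm]
  exact dotProduct_comm _ _

end Stmt9Aux

/-- Adding a moment constraint tightens the square-root bound:
`det Σ(X,Y⁺)/det Σ(Y⁺) ≤ det Σ(X,Y)/det Σ(Y)`, with equality iff
`Cov(X,Y_d) = Cov(X,Y) Σ(Y)⁻¹ Cov(Y,Y_d)`. -/
theorem stmt9 {Ω : Type*} [MeasurableSpace Ω] (μ : Measure Ω) [IsProbabilityMeasure μ]
    (n : ℕ) (X : Ω → ℝ) (Yp : Fin (n + 1) → Ω → ℝ)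
    (hX : MemLp X 2 μ) (hYp : ∀ i, MemLp (Yp i) 2 μ)
    (Y : Fin n → Ω → ℝ) (hY : Y = fun i => Yp i.castSucc)
    (SXYp : Matrix (Fin (n + 2)) (Fin (n + 2)) ℝ)
    (hSXYp : SXYp = Matrix.of fun i j =>
      covar μ ((Fin.cons X Yp : Fin (n + 2) → Ω → ℝ) i) ((Fin.cons X Yp : Fin (n + 2) → Ω → ℝ) j))
    (SYp : Matrix (Fin (n + 1)) (Fin (n + 1)) ℝ)
    (hSYp : SYp = Matrix.of fun i j => covar μ (Yp i) (Yp j))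
    (SXY : Matrix (Fin (n + 1)) (Fin (n + 1)) ℝ)
    (hSXY : SXY = Matrix.of fun i j =>
      covar μ ((Fin.cons X Y : Fin (n + 1) → Ω → ℝ) i) ((Fin.cons X Y : Fin (n + 1) → Ω → ℝ) j))
    (SY : Matrix (Fin n) (Fin n) ℝ)
    (hSY : SY = Matrix.of fun i j => covar μ (Y i) (Y j))
    (hinvXYp : IsUnit SXYp.det) (hinvYp : IsUnit SYp.det)
    (hinvXY : IsUnit SXY.det) (hinvY : IsUnit SY.det) :
    SXYp.det / SYp.det ≤ SXY.det / SY.det ∧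
      (SXYp.det / SYp.det = SXY.det / SY.det ↔
        covar μ X (Yp (Fin.last n)) =
          (fun i => covar μ X (Y i)) ⬝ᵥ (SY⁻¹ *ᵥ fun i => covar μ (Y i) (Yp (Fin.last n)))) := by
  classical
  have hYi : ∀ i, Y i = Yp i.castSucc := fun i => by rw [hY]
  set V : ℝ := covar μ X X with hV
  set c : Fin n → ℝ := fun i => covar μ X (Y i) with hc
  set cp : Fin (n + 1) → ℝ := fun i => covar μ X (Yp i) with hcp
  set γ : ℝ := covar μ X (Yp (Fin.last n)) with hγ
  set b : Fin n → ℝ := fun i => covar μ (Y i) (Yp (Fin.last n)) with hb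
  -- determinant / Schur formulas
  have hdXY : SXY.det = SY.det * (V - c ⬝ᵥ SY⁻¹ *ᵥ c) := by
    refine Stmt9Aux.det_cons_schur _ _ _ _ ?_ ?_ ?_ ?_ hinvY
    · rw [hSXY]; simp [hV]
    · intro j; rw [hSXY]; simp [hc]
    · intro i; rw [hSXY]
      simp only [Matrix.of_apply, Fin.cons_succ, Fin.cons_zero]
      rw [Stmt9Aux.covar_comm]
    · intro i j; rw [hSXY, hSY]; simp
  have hdXYp : SXYp.det = SYp.det * (V - cp ⬝ᵥ SYp⁻¹ *ᵥ cp) := by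
    refine Stmt9Aux.det_cons_schur _ _ _ _ ?_ ?_ ?_ ?_ hinvYp
    · rw [hSXYp]; simp [hV]
    · intro j; rw [hSXYp]; simp [hcp]
    · intro i; rw [hSXYp]
      simp only [Matrix.of_apply, Fin.cons_succ, Fin.cons_zero]
      rw [Stmt9Aux.covar_comm]
    · intro i j; rw [hSXYp, hSYp]; simp
  have hsymmY : SYᵀ = SY := by
    rw [hSY]; ext i j
    simp only [transpose_apply, Matrix.of_apply]
    exact Stmt9Aux.covar_comm _ _
  have hsymmYp : SYpᵀ = SYp := by
    rw [hSYp]; ext i j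
    simp only [transpose_apply, Matrix.of_apply]
    exact Stmt9Aux.covar_comm _ _
  have hpsd : SYp.PosSemidef := by rw [hSYp]; exact Stmt9Aux.posSemidef_cov Yp hYp
  set u : Fin n → ℝ := SY⁻¹ *ᵥ c with hu
  set a0 : Fin (n + 1) → ℝ := Fin.snoc u 0 with ha0
  have hSYu : SY *ᵥ u = c := by
    rw [hu, Matrix.mulVec_mulVec, Matrix.mul_nonsing_inv _ hinvY, Matrix.one_mulVec]
  have hcp_snoc : cp = Fin.snoc c γ := by
    funext i
    induction i using Fin.lastCases with
    | last => simp [hcp, hγ]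
    | cast i => simp [hcp, hc, hYi]
  have hmul : SYp *ᵥ a0 = Fin.snoc c (b ⬝ᵥ u) := by
    funext i
    rw [show (SYp *ᵥ a0) i = ∑ j, SYp i j * a0 j from by simp [Matrix.mulVec, dotProduct]]
    rw [Fin.sum_univ_castSucc]
    rw [show a0 (Fin.last n) = 0 from by simp [ha0], mul_zero, add_zero]
    induction i using Fin.lastCases with
    | last =>
      rw [Fin.snoc_last]
      rw [show b ⬝ᵥ u = ∑ j, b j * u j from rfl]
      refine Finset.sum_congr rfl fun j _ => ?_
      rw [show a0 j.castSucc = u j from by simp [ha0]]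
      congr 1
      rw [hSYp]
      simp only [Matrix.of_apply]
      rw [Stmt9Aux.covar_comm, hb, ← hYi]
    | cast i =>
      rw [Fin.snoc_castSucc, ← hSYu]
      rw [show (SY *ᵥ u) i = ∑ j, SY i j * u j from by simp [Matrix.mulVec, dotProduct]]
      refine Finset.sum_congr rfl fun j _ => ?_
      rw [show a0 j.castSucc = u j from by simp [ha0]]
      congr 1
      rw [hSYp, hSY]
      simp only [Matrix.of_apply]
      rw [hYi, hYi]
  have hA1 : a0 ⬝ᵥ cp = u ⬝ᵥ c := by
    rw [hcp_snoc]
    simp [dotProduct, Fin.sum_univ_castSucc, ha0]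
  have hA2 : a0 ⬝ᵥ (SYp *ᵥ a0) = u ⬝ᵥ c := by
    rw [hmul]
    simp [dotProduct, Fin.sum_univ_castSucc, ha0]
  have hw := Stmt9Aux.quad_identity SYp hsymmYp hinvYp cp a0
  set w : Fin (n + 1) → ℝ := a0 - SYp⁻¹ *ᵥ cp with hwdef
  rw [hA2, hA1] at hw
  have hkey : w ⬝ᵥ SYp *ᵥ w = cp ⬝ᵥ SYp⁻¹ *ᵥ cp - u ⬝ᵥ c := by rw [hw]; ring
  have hucc : u ⬝ᵥ c = c ⬝ᵥ SY⁻¹ *ᵥ c := by rw [hu]; exact dotProduct_comm _ _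
  have hdY : SY.det ≠ 0 := hinvY.ne_zero
  have hdYp : SYp.det ≠ 0 := hinvYp.ne_zero
  have hr1 : SXY.det / SY.det = V - c ⬝ᵥ SY⁻¹ *ᵥ c := by
    rw [hdXY]; exact mul_div_cancel_left₀ _ hdY
  have hr2 : SXYp.det / SYp.det = V - cp ⬝ᵥ SYp⁻¹ *ᵥ cp := by
    rw [hdXYp]; exact mul_div_cancel_left₀ _ hdYp
  have hpos : 0 ≤ w ⬝ᵥ SYp *ᵥ w := by simpa using hpsd.dotProduct_mulVec_nonneg w
  constructor
  · rw [hr1, hr2]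
    linarith [hpos, hkey, hucc]
  · rw [hr1, hr2]
    constructor
    · intro heq
      have h0 : w ⬝ᵥ SYp *ᵥ w = 0 := by rw [hkey]; linarith [hucc]
      have h1 : SYp *ᵥ w = 0 := (hpsd.dotProduct_mulVec_zero_iff w).mp (by simpa using h0)
      have h2 : w = 0 := by
        have h3 := congrArg (fun v => SYp⁻¹ *ᵥ v) h1
        simpa [Matrix.mulVec_mulVec, Matrix.nonsing_inv_mul _ hinvYp, Matrix.one_mulVec,
          Matrix.mulVec_zero] using h3
      have h3 : SYp *ᵥ a0 = cp := by
        have ha : a0 = SYp⁻¹ *ᵥ cp := by rwa [hwdef, sub_eq_zero] at h2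
        rw [ha, Matrix.mulVec_mulVec, Matrix.mul_nonsing_inv _ hinvYp, Matrix.one_mulVec]
      rw [hmul, hcp_snoc] at h3
      have h4 : b ⬝ᵥ u = γ := by
        have h5 := congrFun h3 (Fin.last n)
        simpa using h5
      rw [← h4, hu]
      exact Stmt9Aux.dot_inv_comm SY hsymmY b c
    · intro heq
      have hbu : b ⬝ᵥ u = γ := by
        rw [heq, hu]
        exact (Stmt9Aux.dot_inv_comm SY hsymmY b c).symm ▸ rfl
      have h3 : SYp *ᵥ a0 = cp := by rw [hmul, hcp_snoc, hbu]
      have hwz : w = 0 := by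
        rw [hwdef, sub_eq_zero]
        have h5 := congrArg (fun v => SYp⁻¹ *ᵥ v) h3
        simpa [Matrix.mulVec_mulVec, Matrix.nonsing_inv_mul _ hinvYp,
          Matrix.one_mulVec] using h5
      have h0 : (0 : ℝ) = cp ⬝ᵥ SYp⁻¹ *ᵥ cp - u ⬝ᵥ c := by
        rw [← hkey, hwz]; simp
      linarith [hucc]
end

section
/- If the distribution of X under P has a point mass p > 0 at its essential supremum x̄ and δ ≥ 1/p - 1, then L* = (1/p)·1{X = x̄} satisfies E[L*] = 1, E[(L*-1)²] ≤ δ, and E[L*X] = x̄, which is the maximal possible value of E[L'X] over all L' ≥ 0 with E[L'] = 1. -/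
open MeasureTheory

/-- If `X` has a point mass `p > 0` at its essential supremum `x̄` and
`δ ≥ 1/p - 1`, then `L* = (1/p)·1{X = x̄}` is feasible and achieves
`E[L*X] = x̄`, the maximal possible value of `E[L'X]`. -/
theorem stmt12 {Ω : Type*} [MeasurableSpace Ω] (μ : Measure Ω) [IsProbabilityMeasure μ]
    (X : Ω → ℝ) (hXmeas : Measurable X) (xbar : ℝ)
    (hXle : ∀ᵐ ω ∂μ, X ω ≤ xbar)
    (p : ℝ) (hp : p = (μ {ω | X ω = xbar}).toReal) (hppos : 0 < p)
    (δ : ℝ) (hδ : 1 / p - 1 ≤ δ)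
    (Lstar : Ω → ℝ)
    (hLstar : Lstar = fun ω => (1 / p) * Set.indicator {ω | X ω = xbar} (fun _ => (1 : ℝ)) ω) :
    (∫ ω, Lstar ω ∂μ) = 1 ∧
    (∫ ω, (Lstar ω - 1) ^ 2 ∂μ) ≤ δ ∧
    (∫ ω, Lstar ω * X ω ∂μ) = xbar ∧
    (∀ L' : Ω → ℝ, (∀ ω, 0 ≤ L' ω) → Integrable L' μ →
      Integrable (fun ω => L' ω * X ω) μ → (∫ ω, L' ω ∂μ) = 1 →
      (∫ ω, L' ω * X ω ∂μ) ≤ xbar) := by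
  set A : Set Ω := {ω | X ω = xbar} with hA
  have hAmeas : MeasurableSet A := hXmeas (measurableSet_singleton xbar)
  have hpne : p ≠ 0 := ne_of_gt hppos
  have hμA : (μ A).toReal = p := hp.symm
  have hint_ind : ∀ c : ℝ, ∫ ω, A.indicator (fun _ => c) ω ∂μ = p * c := by
    intro c
    rw [integral_indicator_const c hAmeas, Measure.real, hμA, smul_eq_mul]
  refine ⟨?_, ?_, ?_, ?_⟩
  · have : (fun ω => Lstar ω) = fun ω => A.indicator (fun _ => 1 / p) ω := by
      funext ω
      by_cases h : ω ∈ A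
      · simp [hLstar, Set.indicator_of_mem h]
      · simp [hLstar, Set.indicator_of_notMem h]
    rw [this, hint_ind]
    field_simp
  · have heq : (fun ω => (Lstar ω - 1) ^ 2)
        = fun ω => A.indicator (fun _ => (1 / p - 1) ^ 2 - 1) ω + 1 := by
      funext ω
      by_cases h : ω ∈ A
      · simp [hLstar, Set.indicator_of_mem h]
      · simp [hLstar, Set.indicator_of_notMem h]
    rw [heq]
    have hint1 : Integrable (fun ω => A.indicator (fun _ => (1 / p - 1) ^ 2 - 1) ω) μ := by
      exact (integrable_indicator_iff hAmeas).mpr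
        ((integrableOn_const_iff).mpr (Or.inr (measure_lt_top μ A)))
    rw [integral_add hint1 (integrable_const 1), hint_ind, integral_const]
    simp only [measure_univ, ENNReal.toReal_one, probReal_univ, smul_eq_mul, one_mul]
    have : p * ((1 / p - 1) ^ 2 - 1) + 1 = 1 / p - 1 := by
      field_simp
      ring
    linarith
  · have : (fun ω => Lstar ω * X ω) = fun ω => A.indicator (fun _ => xbar / p) ω := by
      funext ω
      by_cases h : ω ∈ A
      · have hx : X ω = xbar := h
        simp [hLstar, Set.indicator_of_mem h, hx]
        ring
      · simp [hLstar, Set.indicator_of_notMem h]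
    rw [this, hint_ind]
    field_simp
  · intro L' hL'nonneg hL'int hL'Xint hL'mean
    have hmono : ∀ᵐ ω ∂μ, L' ω * X ω ≤ L' ω * xbar := by
      filter_upwards [hXle] with ω hω
      exact mul_le_mul_of_nonneg_left hω (hL'nonneg ω)
    have hintc : Integrable (fun ω => L' ω * xbar) μ := hL'int.mul_const xbar
    calc ∫ ω, L' ω * X ω ∂μ ≤ ∫ ω, L' ω * xbar ∂μ :=
          integral_mono_ae hL'Xint hintc hmono
      _ = (∫ ω, L' ω ∂μ) * xbar := by rw [integral_mul_const]
      _ = xbar := by rw [hL'mean, one_mul]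
end

section
/- For Y uniform (Lebesgue) on [0,1] as the dominating measure, the variance under μ = Leb of X(z) = 2((1-z)Y ∨ z(1-Y)) times (1 - Corr_μ(X,Y)²) equals (4/3)z³(1-z)³; equivalently, det(Σ_μ(X,Y))/det(Σ_μ(Y)) = (4/3)z³(1-z)³ for z ∈ (0,1). -/
open MeasureTheory

private lemma quadInt (a b c0 c1 c2 : ℝ) :
    ∫ x in a..b, (c0 + c1 * x + c2 * x ^ 2) =
      c0 * (b - a) + c1 * (b ^ 2 - a ^ 2) / 2 + c2 * (b ^ 3 - a ^ 3) / 3 := by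
  have h : ∀ x ∈ Set.uIcc a b,
      HasDerivAt (fun x : ℝ => c0 * x + (c1 / 2 * x ^ 2 + c2 / 3 * x ^ 3))
        (c0 + c1 * x + c2 * x ^ 2) x := by
    intro x _
    have h1 : HasDerivAt (fun x : ℝ => x) 1 x := hasDerivAt_id x
    have h2 := (hasDerivAt_pow 2 x).const_mul (c1 / 2)
    have h3 := (hasDerivAt_pow 3 x).const_mul (c2 / 3)
    have := (h1.const_mul c0).add (h2.add h3)
    refine this.congr_deriv ?_
    push_cast
    ring
  rw [intervalIntegral.integral_eq_sub_of_hasDerivAt h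
      (Continuous.intervalIntegrable (by continuity) a b)]
  ring

private lemma splitEval (z : ℝ) (hz0 : 0 ≤ z) (hz1 : z ≤ 1) (f g1 g2 : ℝ → ℝ)
    (hf : Continuous f)
    (h1 : ∀ x ∈ Set.Icc 0 z, f x = g1 x) (h2 : ∀ x ∈ Set.Icc z 1, f x = g2 x) :
    ∫ x in (0:ℝ)..1, f x = (∫ x in (0:ℝ)..z, g1 x) + ∫ x in z..(1:ℝ), g2 x := by
  rw [← intervalIntegral.integral_add_adjacent_intervals
      (hf.intervalIntegrable 0 z) (hf.intervalIntegrable z 1)]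
  congr 1
  · exact intervalIntegral.integral_congr (by rwa [Set.uIcc_of_le hz0])
  · exact intervalIntegral.integral_congr (by rwa [Set.uIcc_of_le hz1])

/-- For the uniform dominating measure on `[0,1]`, `Y(ω) = ω` and
`X = 2((1-z)Y ∨ z(1-Y))`, one has
`Var(X) - Cov(X,Y)²/Var(Y) = (4/3) z³ (1-z)³`, i.e.
`det Σ(X,Y)/det Σ(Y) = (4/3) z³ (1-z)³`. -/
theorem stmt16 (z : ℝ) (hz : z ∈ Set.Ioo (0 : ℝ) 1)
    (μ : Measure ℝ) (hμ : μ = volume.restrict (Set.Icc (0 : ℝ) 1))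
    (X : ℝ → ℝ) (hX : X = fun ω => 2 * max ((1 - z) * ω) (z * (1 - ω)))
    (varX covXY varY : ℝ)
    (hvarX : varX = ∫ ω, (X ω - ∫ x, X x ∂μ) ^ 2 ∂μ)
    (hcov : covXY = ∫ ω, (X ω - ∫ x, X x ∂μ) * (ω - ∫ x, x ∂μ) ∂μ)
    (hvarY : varY = ∫ ω, (ω - ∫ x, x ∂μ) ^ 2 ∂μ) :
    varX - covXY ^ 2 / varY = (4 / 3) * z ^ 3 * (1 - z) ^ 3 := by
  obtain ⟨hz0', hz1'⟩ := hz
  have hz0 : (0:ℝ) ≤ z := hz0'.le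
  have hz1 : z ≤ 1 := hz1'.le
  have hXc : Continuous X := by
    rw [hX]
    exact continuous_const.mul ((continuous_const.mul continuous_id).max
      (continuous_const.mul (continuous_const.sub continuous_id)))
  have hconv : ∀ f : ℝ → ℝ, (∫ x, f x ∂μ) = ∫ x in (0:ℝ)..1, f x := by
    intro f
    rw [hμ, intervalIntegral.integral_of_le zero_le_one,
      MeasureTheory.integral_Icc_eq_integral_Ioc]
  -- X on the two pieces
  have hX1 : ∀ x ∈ Set.Icc (0:ℝ) z, X x = 2 * z * (1 - x) := by
    intro x hx
    rw [hX]
    dsimp only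
    rw [max_eq_right (by nlinarith [hx.1, hx.2])]
    ring
  have hX2 : ∀ x ∈ Set.Icc z (1:ℝ), X x = 2 * (1 - z) * x := by
    intro x hx
    rw [hX]
    dsimp only
    rw [max_eq_left (by nlinarith [hx.1, hx.2])]
    ring
  -- mean of Y
  have hmY : (∫ x, x ∂μ) = 1 / 2 := by
    rw [hconv (fun x => x)]
    have : (fun x : ℝ => x) = fun x => 0 + 1 * x + 0 * x ^ 2 := by funext x; ring
    rw [this, quadInt]; norm_num
  -- mean of X
  have hmX : (∫ x, X x ∂μ) = 1 - z + z ^ 2 := by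
    rw [hconv X,
      splitEval z hz0 hz1 X (fun x => 2 * z + (-(2 * z)) * x + 0 * x ^ 2)
        (fun x => 0 + 2 * (1 - z) * x + 0 * x ^ 2) hXc
        (fun x hx => by rw [hX1 x hx]; ring)
        (fun x hx => by rw [hX2 x hx]; ring),
      quadInt, quadInt]
    ring
  set M : ℝ := 1 - z + z ^ 2 with hM
  -- variance of Y
  have hVY : varY = 1 / 12 := by
    rw [hvarY]
    simp only [hmY]
    rw [hconv (fun ω => (ω - 1 / 2) ^ 2)]
    have : (fun ω : ℝ => (ω - 1 / 2) ^ 2) = fun x => 1 / 4 + (-1) * x + 1 * x ^ 2 := by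
      funext x; ring
    rw [this, quadInt]; norm_num
  -- variance of X
  have hVX : varX = 1 / 3 - 2 / 3 * z - 5 / 3 * z ^ 2 + 14 / 3 * z ^ 3 - 7 / 3 * z ^ 4 := by
    rw [hvarX]
    simp only [hmX, ← hM]
    rw [hconv (fun ω => (X ω - M) ^ 2),
      splitEval z hz0 hz1 (fun ω => (X ω - M) ^ 2)
        (fun x => (2 * z - M) ^ 2 + (-(4 * z) * (2 * z - M)) * x + 4 * z ^ 2 * x ^ 2)
        (fun x => M ^ 2 + (-(4 * (1 - z) * M)) * x + 4 * (1 - z) ^ 2 * x ^ 2)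
        ((hXc.sub continuous_const).pow 2)
        (fun x hx => by rw [hX1 x hx]; ring)
        (fun x hx => by rw [hX2 x hx]; ring),
      quadInt, quadInt, hM]
    ring
  -- covariance
  have hCov : covXY = 1 / 6 - 1 / 6 * z - 1 / 2 * z ^ 2 + 1 / 3 * z ^ 3 := by
    rw [hcov]
    simp only [hmX, hmY, ← hM]
    rw [hconv (fun ω => (X ω - M) * (ω - 1 / 2)),
      splitEval z hz0 hz1 (fun ω => (X ω - M) * (ω - 1 / 2))
        (fun x => (-(2 * z - M) / 2) + ((2 * z - M) + z) * x + (-(2 * z)) * x ^ 2)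
        (fun x => M / 2 + (-(1 - z) - M) * x + 2 * (1 - z) * x ^ 2)
        ((hXc.sub continuous_const).mul (continuous_id.sub continuous_const))
        (fun x hx => by rw [hX1 x hx]; ring)
        (fun x hx => by rw [hX2 x hx]; ring),
      quadInt, quadInt, hM]
    ring
  rw [hVX, hCov, hVY]
  field_simp
  ring
end
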